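/- Let q > 1 be a real number and x ≥ 0. Define the sequence (b_i) of nonnegative integers recursively: if b_k has been defined for all k < n, let b_n be the largest nonnegative integer satisfying b_1/q + ... + b_n/q^n ≤ x. Then Σ_{i≥1} b_i q^{−i} = x, and furthermore b_n < q for all n ≥ 2. -/
import Mathlib


/-- The next greedy digit with unbounded digits: the largest nonnegative integer `m`
with `s + m / q ^ (n+1) ≤ x`, where `s` is the value of the previously chosen digits. -/
noncomputable def gDigitU (q x s : ℝ) (n : ℕ) : ℕ :=
  sSup {m : ℕ | s + (m : ℝ) / q ^ (n + 1) ≤ x}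

/-- Partial sums of the greedy expansion of `x` in base `q` with unbounded digits. -/
noncomputable def gSumU (q x : ℝ) : ℕ → ℝ
  | 0 => 0
  | n + 1 => gSumU q x n + (gDigitU q x (gSumU q x n) n : ℝ) / q ^ (n + 1)

/-- `greedyU q x n` is the `(n+1)`-st digit (indexing from 0) of the greedy expansion
of `x` in base `q` with unbounded digits: recursively, it is the largest nonnegative
integer `b_n` with `b_1/q + ⋯ + b_n/q^n ≤ x`. -/
noncomputable def greedyU (q x : ℝ) (n : ℕ) : ℕ :=
  gDigitU q x (gSumU q x n) n

section aux
variable {q x s : ℝ} {n : ℕ}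

lemma gBdd (hq : 1 < q) : BddAbove {m : ℕ | s + (m : ℝ) / q ^ (n + 1) ≤ x} := by
  have hqp : (0:ℝ) < q ^ (n+1) := pow_pos (lt_trans one_pos hq) _
  refine ⟨⌈(x - s) * q ^ (n+1)⌉₊, fun m hm => ?_⟩
  have h1 : (m : ℝ) ≤ (x - s) * q ^ (n+1) := by
    rw [Set.mem_setOf_eq] at hm
    have : (m:ℝ)/q^(n+1) ≤ x - s := by linarith
    calc (m:ℝ) = (m:ℝ)/q^(n+1)*q^(n+1) := by field_simp
    _ ≤ (x-s)*q^(n+1) := by nlinarith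
  exact_mod_cast h1.trans (Nat.le_ceil _)

lemma gDigit_le (hq : 1 < q) (hs : s ≤ x) :
    s + (gDigitU q x s n : ℝ) / q ^ (n + 1) ≤ x := by
  have hqp : (0:ℝ) < q ^ (n+1) := pow_pos (lt_trans one_pos hq) _
  have h0 : 0 ∈ {m : ℕ | s + (m : ℝ) / q ^ (n + 1) ≤ x} := by
    simp [hs]
  exact Nat.sSup_mem ⟨0, h0⟩ (gBdd hq)

lemma gDigit_lt (hq : 1 < q) :
    x < s + ((gDigitU q x s n : ℝ) + 1) / q ^ (n + 1) := by
  by_contra h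
  push_neg at h
  have hmem : gDigitU q x s n + 1 ∈ {m : ℕ | s + (m : ℝ) / q ^ (n + 1) ≤ x} := by
    simpa using h
  have h2 : gDigitU q x s n + 1 ≤ gDigitU q x s n := le_csSup (gBdd hq) hmem
  omega

lemma gSumU_le (hq : 1 < q) (hx : 0 ≤ x) : ∀ n, gSumU q x n ≤ x
  | 0 => by simpa [gSumU]
  | n + 1 => by
      have := gDigit_le (n := n) hq (gSumU_le hq hx n)
      simpa [gSumU] using this

lemma gSumU_lt (hq : 1 < q) (hx : 0 ≤ x) (n : ℕ) :
    x < gSumU q x (n + 1) + 1 / q ^ (n + 1) := by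
  have hqp : (0:ℝ) < q ^ (n+1) := pow_pos (lt_trans one_pos hq) _
  have := gDigit_lt (q := q) (x := x) (s := gSumU q x n) (n := n) hq
  have hsum : gSumU q x (n+1) = gSumU q x n + (gDigitU q x (gSumU q x n) n : ℝ) / q ^ (n+1) := rfl
  rw [hsum]
  rw [add_div] at this
  linarith

lemma partial_eq (q x : ℝ) : ∀ n, ∑ i ∈ Finset.range n, (greedyU q x i : ℝ) / q ^ (i + 1) = gSumU q x n
  | 0 => by simp [gSumU]
  | n + 1 => by
      rw [Finset.sum_range_succ, partial_eq q x n]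
      rfl
end aux


/-- Proposition 3.5: for `q > 1` and `x ≥ 0`, the greedy sequence with unbounded digits
is an expansion of `x`, and moreover `b_n < q` for all `n ≥ 2`. -/
theorem greedyU_expansion (q x : ℝ) (hq : 1 < q) (hx : 0 ≤ x) :
    (∑' i, (greedyU q x i : ℝ) / q ^ (i + 1) = x) ∧
    ∀ n, 1 ≤ n → (greedyU q x n : ℝ) < q := by
  have hq0 : (0:ℝ) < q := lt_trans one_pos hq
  constructor
  · have htend : Filter.Tendsto (fun n => ∑ i ∈ Finset.range n, (greedyU q x i : ℝ) / q ^ (i + 1))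
        Filter.atTop (nhds x) := by
      simp only [partial_eq]
      have h0 : Filter.Tendsto (fun n : ℕ => (1/q) ^ n) Filter.atTop (nhds 0) := by
        apply tendsto_pow_atTop_nhds_zero_of_lt_one
        · positivity
        · rw [div_lt_one hq0]; exact hq
      have hlow : Filter.Tendsto (fun n : ℕ => x - (1/q) ^ n) Filter.atTop (nhds x) := by
        simpa using (tendsto_const_nhds (x := x)).sub h0
      refine tendsto_of_tendsto_of_tendsto_of_le_of_le' hlow tendsto_const_nhds ?_ ?_
      · filter_upwards [Filter.eventually_ge_atTop 1] with n hn
        obtain ⟨m, rfl⟩ := Nat.exists_eq_add_of_le hn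
        have := gSumU_lt hq hx m
        have : x - 1 / q ^ (m + 1) ≤ gSumU q x (m + 1) := by linarith
        simpa [div_pow, add_comm] using this
      · filter_upwards with n using gSumU_le hq hx n
    have hnn : ∀ i, 0 ≤ (greedyU q x i : ℝ) / q ^ (i + 1) := fun i => by positivity
    exact ((hasSum_iff_tendsto_nat_of_nonneg hnn x).mpr htend).tsum_eq
  · intro n hn
    obtain ⟨m, rfl⟩ := Nat.exists_eq_add_of_le hn
    have hqp : (0:ℝ) < q ^ (1 + m + 1) := pow_pos hq0 _
    have h1 := gDigit_le (q := q) (x := x) (s := gSumU q x (1 + m)) (n := 1 + m) hq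
      (gSumU_le hq hx _)
    have h2 : x < gSumU q x (1 + m) + 1 / q ^ (1 + m) := by
      obtain ⟨k, hk⟩ : ∃ k, 1 + m = k + 1 := ⟨m, by ring⟩
      rw [hk]; exact gSumU_lt hq hx k
    have h3 : (greedyU q x (1 + m) : ℝ) / q ^ (1 + m + 1) < 1 / q ^ (1 + m) := by
      unfold greedyU
      linarith
    rw [div_lt_div_iff₀ hqp (pow_pos hq0 _)] at h3
    rw [one_mul, pow_succ] at h3
    refine lt_of_mul_lt_mul_right ?_ (pow_pos hq0 (1+m)).le
    linarith [h3, mul_comm q (q ^ (1 + m))]
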